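/- For every n ∈ ℕ and every array u : Fin n → Fin n → Fin n → ℂ satisfying u i j k = u i k j for all i, j, k, the real number Re(Σ_{i,j,k} u^i_{jk} · conj(u^j_{ik})) + Σ_{i,j,k} |u^j_{ik}|² is nonnegative, and it is strictly positive whenever u ≠ 0. (This positive definiteness of the hermitian form Θ is the analytic content of the paper's Proposition 3.2: the twisted tautological quotient bundle Q_n(1) on the Lagrangian Grassmannian LG_n is Nakano positive.) -/

import Mathlib

/-- The hermitian form `Θ(u) = Re (Σ_{i,j,k} u^i_{jk} conj(u^j_{ik})) + Σ_{i,j,k} |u^j_{ik}|²`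
(the curvature `Θ_{Q_n(1)}` of the twisted tautological quotient bundle on the Lagrangian
Grassmannian `LG_n`) is positive semidefinite on arrays symmetric in the lower indices,
and positive definite: it vanishes only at `u = 0`. -/
theorem lagrangian_curvature_pos_def (n : ℕ) (u : Fin n → Fin n → Fin n → ℂ)
    (hsym : ∀ i j k, u i j k = u i k j) :
    0 ≤ (∑ i : Fin n, ∑ j : Fin n, ∑ k : Fin n,
          u i j k * (starRingEnd ℂ) (u j i k)).re +
        ∑ i : Fin n, ∑ j : Fin n, ∑ k : Fin n, ‖u j i k‖ ^ 2 ∧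
    (u ≠ 0 →
      0 < (∑ i : Fin n, ∑ j : Fin n, ∑ k : Fin n,
            u i j k * (starRingEnd ℂ) (u j i k)).re +
          ∑ i : Fin n, ∑ j : Fin n, ∑ k : Fin n, ‖u j i k‖ ^ 2) := by
  classical
  have hBC : (∑ i : Fin n, ∑ j : Fin n, ∑ k : Fin n, ‖u j i k‖ ^ 2)
      = ∑ i : Fin n, ∑ j : Fin n, ∑ k : Fin n, ‖u i j k‖ ^ 2 :=
    Finset.sum_comm
  have h1 : ∀ i j k : Fin n, Complex.normSq (u i j k + u j i k)
      = ‖u i j k‖ ^ 2 + ‖u j i k‖ ^ 2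
        + 2 * (u i j k * (starRingEnd ℂ) (u j i k)).re := by
    intro i j k
    rw [Complex.normSq_add, Complex.sq_norm, Complex.sq_norm]
  have hmain : (∑ i : Fin n, ∑ j : Fin n, ∑ k : Fin n,
        u i j k * (starRingEnd ℂ) (u j i k)).re +
      ∑ i : Fin n, ∑ j : Fin n, ∑ k : Fin n, ‖u j i k‖ ^ 2
      = (∑ i : Fin n, ∑ j : Fin n, ∑ k : Fin n,
          Complex.normSq (u i j k + u j i k)) / 2 := by
    simp only [h1, Finset.sum_add_distrib, ← Finset.mul_sum, Complex.re_sum]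
    rw [hBC]
    ring
  rw [hmain]
  have hnonneg : 0 ≤ (∑ i : Fin n, ∑ j : Fin n, ∑ k : Fin n,
      Complex.normSq (u i j k + u j i k)) / 2 :=
    div_nonneg (Finset.sum_nonneg fun _ _ => Finset.sum_nonneg fun _ _ =>
      Finset.sum_nonneg fun _ _ => Complex.normSq_nonneg _) two_pos.le
  refine ⟨hnonneg, fun hu => ?_⟩
  -- strict positivity
  have hne : ∃ i j k : Fin n, u i j k + u j i k ≠ 0 := by
    by_contra h
    push_neg at h
    apply hu
    funext i j k
    have e1 := h i j k
    have e2 := h j k i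
    have e3 := h k i j
    have s1 := hsym j i k
    have s2 := hsym k j i
    have s3 := hsym i k j
    show u i j k = 0
    linear_combination (e1 - e2 + e3 - s1 + s2 - s3) / 2
  obtain ⟨i₀, j₀, k₀, hne⟩ := hne
  have hsum : 0 < ∑ p : Fin n × Fin n × Fin n,
      Complex.normSq (u p.1 p.2.1 p.2.2 + u p.2.1 p.1 p.2.2) := by
    apply Finset.sum_pos' (fun p _ => Complex.normSq_nonneg _)
    exact ⟨(i₀, j₀, k₀), Finset.mem_univ _, Complex.normSq_pos.2 hne⟩
  have hrw : (∑ i : Fin n, ∑ j : Fin n, ∑ k : Fin n,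
      Complex.normSq (u i j k + u j i k))
      = ∑ p : Fin n × Fin n × Fin n,
        Complex.normSq (u p.1 p.2.1 p.2.2 + u p.2.1 p.1 p.2.2) := by
    rw [Fintype.sum_prod_type]
    simp [Fintype.sum_prod_type]
  rw [hrw]
  exact div_pos hsum two_pos
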